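/- If every finite power X^k of a topological space X is star-Menger, then X has the star-Scheepers property. -/
import Mathlib


open Set

/-- The dominating number 𝔡: least cardinality of a dominating family in ℕ^ℕ. -/
noncomputable def dominatingNumber : Cardinal :=
  sInf { c | ∃ D : Set (ℕ → ℕ),
    (∀ g : ℕ → ℕ, ∃ f ∈ D, ∀ᶠ n in Filter.atTop, g n ≤ f n) ∧ c = Cardinal.mk D }

/-- `U` is an open cover of the space `X`. -/
def IsOpenCover {X : Type*} [TopologicalSpace X] (U : Set (Set X)) : Prop :=
  (∀ u ∈ U, IsOpen u) ∧ ⋃₀ U = Set.univ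

/-- The star of a set `A` with respect to a family `U`. -/
def starOf {X : Type*} (A : Set X) (U : Set (Set X)) : Set X :=
  ⋃₀ {B | B ∈ U ∧ (A ∩ B).Nonempty}

/-- The star-Scheepers property (ω-cover form). -/
def StarScheepers (X : Type*) [TopologicalSpace X] : Prop :=
  ∀ U : ℕ → Set (Set X), (∀ n, IsOpenCover (U n)) →
    ∃ V : ℕ → Set (Set X), (∀ n, V n ⊆ U n ∧ (V n).Finite) ∧
      ∀ F : Set X, F.Finite → ∃ n, F ⊆ starOf (⋃₀ V n) (U n)

/-- The strongly star-Scheepers property. -/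
def StronglyStarScheepers (X : Type*) [TopologicalSpace X] : Prop :=
  ∀ U : ℕ → Set (Set X), (∀ n, IsOpenCover (U n)) →
    ∃ F : ℕ → Set X, (∀ n, (F n).Finite) ∧
      ∀ G : Set X, G.Finite → ∃ n, G ⊆ starOf (F n) (U n)

/-- The star-Menger property. -/
def StarMenger (X : Type*) [TopologicalSpace X] : Prop :=
  ∀ U : ℕ → Set (Set X), (∀ n, IsOpenCover (U n)) →
    ∃ V : ℕ → Set (Set X), (∀ n, V n ⊆ U n ∧ (V n).Finite) ∧
      ∀ x : X, ∃ n, ∃ v ∈ V n, x ∈ starOf v (U n)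

theorem stmt_4 {X : Type*} [TopologicalSpace X]
    (h : ∀ k : ℕ, StarMenger (Fin k → X)) :
    StarScheepers X := by
  intro U hU
  set W : (k : ℕ) → ℕ → Set (Set (Fin k → X)) := fun k n =>
    (fun u : Fin k → Set X => Set.univ.pi u) '' {u | ∀ i, u i ∈ U n} with hWdef
  have hW : ∀ k n, IsOpenCover (W k n) := by
    intro k n
    constructor
    · rintro _ ⟨u, hu, rfl⟩
      exact isOpen_set_pi Set.finite_univ (fun i _ => (hU n).1 _ (hu i))
    · ext f
      simp only [mem_sUnion, mem_univ, iff_true]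
      have hmem : ∀ i, ∃ t ∈ U n, f i ∈ t := by
        intro i
        have h2 : f i ∈ ⋃₀ U n := (hU n).2 ▸ mem_univ _
        exact h2
      choose t ht hft using hmem
      exact ⟨Set.univ.pi t, ⟨t, ht, rfl⟩, fun i _ => hft i⟩
  have hk := fun k => h k (fun m => W k (Nat.pair k m)) (fun m => hW k _)
  choose V hV1 hV2 using hk
  have hchoice : ∀ k m (v : Set (Fin k → X)), ∃ u : Fin k → Set X,
      v ∈ V k m → (∀ i, u i ∈ U (Nat.pair k m)) ∧ Set.univ.pi u = v := by
    intro k m v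
    by_cases hv : v ∈ V k m
    · obtain ⟨u, hu, huv⟩ := (hV1 k m).1 hv
      exact ⟨u, fun _ => ⟨hu, huv⟩⟩
    · exact ⟨fun _ => ∅, fun hh => absurd hh hv⟩
  choose uu huu using hchoice
  set G : ℕ → ℕ → Set (Set X) := fun a b => ⋃ v ∈ V a b, Set.range (uu a b v) with hG
  refine ⟨fun n => G n.unpair.1 n.unpair.2, ?_, ?_⟩
  · intro n
    constructor
    · rintro w hw
      simp only [hG, mem_iUnion] at hw
      obtain ⟨v, hv, i, rfl⟩ := hw
      have h1 := (huu _ _ v hv).1 i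
      rwa [Nat.pair_unpair] at h1
    · exact Set.Finite.biUnion (hV1 _ _).2 (fun v _ => Set.finite_range _)
  · intro F hF
    obtain ⟨k, x, hx⟩ := hF.fin_embedding
    obtain ⟨m, v, hv, hst⟩ := hV2 k x
    obtain ⟨B, ⟨hBW, hvB⟩, hxB⟩ := hst
    obtain ⟨w, hw, rfl⟩ := hBW
    obtain ⟨f, hfv, hfB⟩ := hvB
    obtain ⟨huU, huv⟩ := huu k m v hv
    rw [← huv] at hfv
    refine ⟨Nat.pair k m, ?_⟩
    simp only [Nat.unpair_pair]
    intro y hy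
    rw [← hx] at hy
    obtain ⟨i, rfl⟩ := hy
    refine ⟨w i, ⟨hw i, ⟨f i, ?_, hfB i (mem_univ i)⟩⟩, hxB i (mem_univ i)⟩
    refine ⟨uu k m v i, ?_, hfv i (mem_univ i)⟩
    simp only [hG, mem_iUnion]
    exact ⟨v, hv, i, rfl⟩
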